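/- Let ℓ be L-Lipschitz in its first argument and bounded by b. Suppose M, N, K are positive integers with K ≤ M ≤ N, and {Zᵢ}_{i∈ℐ} are mutually independent discrete random variables on a finite set 𝒵 with ℐ_t ⊆ ℐ_p ⊆ ℐ, |ℐ_t| = K, |ℐ_p| = M, |ℐ| = N. Then the selection-based participation gap satisfies |𝔼[(1/N)Σ_{i∈ℐ}ℓ(h,Zᵢ)log(1/P_{Z^ℐ})] − (1/K)Σ_{i∈ℐ_t}𝔼[ℓ(h,Zᵢ)log(1/P_{Zᵢ})]| ≤ b(3 − 2M/N)·H(Z^ℐ) + b(2 − 2K/M − 1/K)·H(Z^{ℐ_p}) + (b/K)·Σ_{i∈ℐ_p∖ℐ_t} H(Zᵢ). -/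

import Mathlib

open Finset

section Helpers

variable {ι Z : Type*} [Fintype ι] [DecidableEq ι] [Fintype Z]

private lemma sum_pi_prod (w : ι → Z → ℝ) :
    ∑ z : ι → Z, ∏ i, w i (z i) = ∏ i, ∑ x, w i x := by
  rw [← Finset.sum_prod_piFinset Finset.univ w, Fintype.piFinset_univ]

private lemma sum_pi_one (p : ι → Z → ℝ) (hpsum : ∀ i, ∑ z, p i z = 1)
    (j : ι) (f : Z → ℝ) :
    ∑ z : ι → Z, (∏ i, p i (z i)) * f (z j) = ∑ x, p j x * f x := by
  have key : ∀ z : ι → Z, (∏ i, p i (z i)) * f (z j)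
      = ∏ i, (p i (z i) * (if i = j then f (z i) else 1)) := by
    intro z
    rw [Finset.prod_mul_distrib, Finset.prod_ite_eq' Finset.univ j fun i => f (z i)]
    simp
  simp only [key]
  rw [sum_pi_prod (fun i x => p i x * if i = j then f x else 1)]
  rw [Finset.prod_eq_single j]
  · simp
  · intro i _ hij
    simp only [if_neg hij, mul_one]
    exact hpsum i
  · simp

private lemma sum_pi_two (p : ι → Z → ℝ) (hpsum : ∀ i, ∑ z, p i z = 1)
    (i j : ι) (hij : i ≠ j) (f g : Z → ℝ) :
    ∑ z : ι → Z, (∏ k, p k (z k)) * f (z i) * g (z j)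
      = (∑ x, p i x * f x) * (∑ x, p j x * g x) := by
  have key : ∀ z : ι → Z, (∏ k, p k (z k)) * f (z i) * g (z j)
      = ∏ k, (p k (z k) * ((if k = i then f (z k) else 1) * (if k = j then g (z k) else 1))) := by
    intro z
    simp only [Finset.prod_mul_distrib]
    rw [Finset.prod_ite_eq' Finset.univ i fun k => f (z k),
        Finset.prod_ite_eq' Finset.univ j fun k => g (z k)]
    simp [mul_assoc]
  simp only [key]
  rw [sum_pi_prod (fun k x => p k x * ((if k = i then f x else 1) * (if k = j then g x else 1)))]
  have hval : ∀ k, (∑ x, p k x * ((if k = i then f x else 1) * (if k = j then g x else 1)))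
      = (if k = i then (∑ x, p i x * f x) else 1) * (if k = j then (∑ x, p j x * g x) else 1) := by
    intro k
    rcases eq_or_ne k i with rfl | hki
    · simp [if_neg hij, hij]
    · rcases eq_or_ne k j with rfl | hkj
      · simp [hki]
      · simp [hki, hkj, hpsum k]
  simp only [hval]
  rw [Finset.prod_mul_distrib,
      Finset.prod_ite_eq' Finset.univ i fun _ => (∑ x, p i x * f x),
      Finset.prod_ite_eq' Finset.univ j fun _ => (∑ x, p j x * g x)]
  simp

private lemma Hpointwise (p : ι → Z → ℝ) (z : ι → Z) :
    (∏ i, p i (z i)) * Real.log (1 / ∏ i, p i (z i))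
      = ∑ j, (∏ i, p i (z i)) * Real.log (1 / p j (z j)) := by
  by_cases h : ∀ i, p i (z i) ≠ 0
  · rw [← Finset.mul_sum]
    congr 1
    rw [one_div, Real.log_inv, Real.log_prod (fun i _ => h i)]
    simp [one_div, Real.log_inv]
  · push_neg at h
    obtain ⟨i0, hi0⟩ := h
    have hP : ∏ i, p i (z i) = 0 := Finset.prod_eq_zero (Finset.mem_univ i0) hi0
    rw [hP]
    simp

private lemma Hsum (p : ι → Z → ℝ) (hpsum : ∀ i, ∑ z, p i z = 1) :
    ∑ z : ι → Z, (∏ i, p i (z i)) * Real.log (1 / ∏ i, p i (z i))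
      = ∑ j, ∑ x, p j x * Real.log (1 / p j x) := by
  simp only [Hpointwise p]
  rw [Finset.sum_comm]
  exact Finset.sum_congr rfl fun j _ => sum_pi_one p hpsum j (fun x => Real.log (1 / p j x))

end Helpers

private lemma real_cert1 (b K M N H Hs T : ℝ) (hb : 0 ≤ b) (hK : 1 ≤ K) (hKM : K ≤ M)
    (hMN : M ≤ N) (hT : 0 ≤ T) (hTHs : T ≤ Hs) (hHsH : Hs ≤ H) :
    b * H - b * T / N
      ≤ b * (3 - 2 * M / N) * H + b * (2 - 2 * K / M - 1 / K) * Hs + (b / K) * (Hs - T) := by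
  have hK0 : (0:ℝ) < K := lt_of_lt_of_le one_pos hK
  have hM0 : (0:ℝ) < M := lt_of_lt_of_le hK0 hKM
  have hN0 : (0:ℝ) < N := lt_of_lt_of_le hM0 hMN
  have hTH : T ≤ H := le_trans hTHs hHsH
  have hKN : (0:ℝ) ≤ 2 * K * N - M := by
    nlinarith [mul_nonneg (sub_nonneg.2 hK) hN0.le]
  have h1 : 0 ≤ 2 * K * H - T := by
    nlinarith [mul_nonneg hK0.le (sub_nonneg.2 hTH), mul_nonneg hT (sub_nonneg.2 hK)]
  have h2 : 0 ≤ 2 * K * N * Hs - M * T := by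
    nlinarith [mul_nonneg hT hKN,
      mul_nonneg (mul_nonneg (by positivity : (0:ℝ) ≤ 2 * K) hN0.le) (sub_nonneg.2 hTHs)]
  have key : 0 ≤ M * (N - M) * (2 * K * H - T) + (M - K) * (2 * K * N * Hs - M * T) := by
    have := mul_nonneg (mul_nonneg hM0.le (sub_nonneg.2 hMN)) h1
    have := mul_nonneg (sub_nonneg.2 hKM) h2
    linarith
  have expand : (b * (3 - 2 * M / N) * H + b * (2 - 2 * K / M - 1 / K) * Hs
        + (b / K) * (Hs - T)) - (b * H - b * T / N)
      = b * (M * (N - M) * (2 * K * H - T) + (M - K) * (2 * K * N * Hs - M * T)) / (K * M * N) := by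
    field_simp
    ring
  have : 0 ≤ b * (M * (N - M) * (2 * K * H - T) + (M - K) * (2 * K * N * Hs - M * T)) / (K * M * N) :=
    div_nonneg (mul_nonneg hb key) (by positivity)
  linarith

private lemma real_cert2 (b K M N H Hs T : ℝ) (hb : 0 ≤ b) (hK : 1 ≤ K) (hKM : K ≤ M)
    (hMN : M ≤ N) (hT : 0 ≤ T) (hTHs : T ≤ Hs) (hHsH : Hs ≤ H) :
    (1 / K - 1 / N) * (b * T)
      ≤ b * (3 - 2 * M / N) * H + b * (2 - 2 * K / M - 1 / K) * Hs + (b / K) * (Hs - T) := by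
  have hK0 : (0:ℝ) < K := lt_of_lt_of_le one_pos hK
  have hM0 : (0:ℝ) < M := lt_of_lt_of_le hK0 hKM
  have hN0 : (0:ℝ) < N := lt_of_lt_of_le hM0 hMN
  have hTH : T ≤ H := le_trans hTHs hHsH
  have hKN : (0:ℝ) ≤ 2 * K * N - M := by
    nlinarith [mul_nonneg (sub_nonneg.2 hK) hN0.le]
  have h1 : 0 ≤ 2 * K * H - T := by
    nlinarith [mul_nonneg hK0.le (sub_nonneg.2 hTH), mul_nonneg hT (sub_nonneg.2 hK)]
  have h2 : 0 ≤ 2 * K * N * Hs - M * T := by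
    nlinarith [mul_nonneg hT hKN,
      mul_nonneg (mul_nonneg (by positivity : (0:ℝ) ≤ 2 * K) hN0.le) (sub_nonneg.2 hTHs)]
  have h3 : 0 ≤ K * H - T := by
    nlinarith [mul_nonneg hK0.le (sub_nonneg.2 hTH), mul_nonneg hT (sub_nonneg.2 hK)]
  have key : 0 ≤ M * (N - M) * (2 * K * H - T) + (M - K) * (2 * K * N * Hs - M * T)
      + M * N * (K * H - T) := by
    have := mul_nonneg (mul_nonneg hM0.le (sub_nonneg.2 hMN)) h1
    have := mul_nonneg (sub_nonneg.2 hKM) h2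
    have := mul_nonneg (mul_nonneg hM0.le hN0.le) h3
    linarith
  have expand : (b * (3 - 2 * M / N) * H + b * (2 - 2 * K / M - 1 / K) * Hs
        + (b / K) * (Hs - T)) - (1 / K - 1 / N) * (b * T)
      = b * (M * (N - M) * (2 * K * H - T) + (M - K) * (2 * K * N * Hs - M * T)
          + M * N * (K * H - T)) / (K * M * N) := by
    field_simp
    ring
  have : 0 ≤ b * (M * (N - M) * (2 * K * H - T) + (M - K) * (2 * K * N * Hs - M * T)
      + M * N * (K * H - T)) / (K * M * N) :=
    div_nonneg (mul_nonneg hb key) (by positivity)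
  linarith

/-- Selection-based participation gap bound: for selected clients `t ⊆ s ⊆ ι` with
`|t| = K`, `|s| = M`, `|ι| = N`, the gap is bounded by
`b(3 - 2M/N) H(Z^I) + b(2 - 2K/M - 1/K) H(Z^{I_p}) + (b/K) ∑_{i ∈ s \ t} H(Z_i)`. -/
theorem stmt_14 {ι Z : Type*} [Fintype ι] [DecidableEq ι] [Fintype Z]
    (p : ι → Z → ℝ) (hp : ∀ i z, 0 ≤ p i z) (hpsum : ∀ i, ∑ z, p i z = 1)
    (ℓ : Z → ℝ) (b : ℝ) (hl0 : ∀ z, 0 ≤ ℓ z) (hlb : ∀ z, ℓ z ≤ b)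
    (s t : Finset ι) (hts : t ⊆ s)
    (K M N : ℕ) (hK : t.card = K) (hM : s.card = M) (hN : Fintype.card ι = N)
    (hKpos : 0 < K) (hMpos : 0 < M) (hNpos : 0 < N) :
    |(∑ z : ι → Z, (∏ i, p i (z i)) * ((1 / (N : ℝ)) * ∑ i, ℓ (z i)) *
        Real.log (1 / ∏ i, p i (z i)))
      - (1 / (K : ℝ)) * ∑ i ∈ t, ∑ zi, p i zi * ℓ zi * Real.log (1 / p i zi)|
    ≤ b * (3 - 2 * (M : ℝ) / N) *
        (∑ z : ι → Z, (∏ i, p i (z i)) * Real.log (1 / ∏ i, p i (z i)))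
      + b * (2 - 2 * (K : ℝ) / M - 1 / (K : ℝ)) *
        (∑ z : ↥s → Z, (∏ i, p i.1 (z i)) * Real.log (1 / ∏ i, p i.1 (z i)))
      + (b / (K : ℝ)) * ∑ i ∈ s \ t, ∑ zi, p i zi * Real.log (1 / p i zi) := by
  classical
  -- basic objects
  set Hi : ι → ℝ := fun i => ∑ x, p i x * Real.log (1 / p i x) with hHidef
  set Di : ι → ℝ := fun i => ∑ x, p i x * ℓ x * Real.log (1 / p i x) with hDidef
  set ei : ι → ℝ := fun i => ∑ x, p i x * ℓ x with heidef
  set Hb : ℝ := ∑ i, Hi i with hHbdef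
  -- nonemptiness of ι and Z, nonnegativity of b
  have hιne : Nonempty ι := Fintype.card_pos_iff.mp (hN ▸ hNpos)
  have hZne : Nonempty Z := by
    by_contra h
    rw [not_nonempty_iff] at h
    have := hpsum (Classical.arbitrary ι)
    simp [Finset.univ_eq_empty] at this
  have hb : 0 ≤ b := le_trans (hl0 (Classical.arbitrary Z)) (hlb _)
  -- p ≤ 1 and log nonneg
  have hp1 : ∀ i x, p i x ≤ 1 := by
    intro i x
    rw [← hpsum i]
    exact Finset.single_le_sum (fun y _ => hp i y) (Finset.mem_univ x)
  have hlog : ∀ i x, 0 ≤ Real.log (1 / p i x) := by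
    intro i x
    rw [one_div, Real.log_inv]
    linarith [Real.log_nonpos (hp i x) (hp1 i x)]
  have hHi0 : ∀ i, 0 ≤ Hi i := fun i =>
    Finset.sum_nonneg fun x _ => mul_nonneg (hp i x) (hlog i x)
  have hHiH : ∀ i, Hi i ≤ Hb :=
    fun i => Finset.single_le_sum (fun j _ => hHi0 j) (Finset.mem_univ i)
  have hDi0 : ∀ i, 0 ≤ Di i := fun i =>
    Finset.sum_nonneg fun x _ =>
      mul_nonneg (mul_nonneg (hp i x) (hl0 x)) (hlog i x)
  have hDib : ∀ i, Di i ≤ b * Hi i := by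
    intro i
    have step : ∀ x, p i x * ℓ x * Real.log (1 / p i x)
        ≤ b * (p i x * Real.log (1 / p i x)) := by
      intro x
      have h := mul_le_mul_of_nonneg_left (hlb x) (mul_nonneg (hp i x) (hlog i x))
      nlinarith [h]
    calc Di i = ∑ x, p i x * ℓ x * Real.log (1 / p i x) := rfl
      _ ≤ ∑ x, b * (p i x * Real.log (1 / p i x)) :=
          Finset.sum_le_sum fun x _ => step x
      _ = b * ∑ x, p i x * Real.log (1 / p i x) := (Finset.mul_sum _ _ _).symm
      _ = b * Hi i := rfl
  have hei0 : ∀ i, 0 ≤ ei i := fun i =>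
    Finset.sum_nonneg fun x _ => mul_nonneg (hp i x) (hl0 x)
  have heib : ∀ i, ei i ≤ b := by
    intro i
    calc ei i ≤ ∑ x, p i x * b :=
          Finset.sum_le_sum fun x _ => mul_le_mul_of_nonneg_left (hlb x) (hp i x)
      _ = b := by rw [← Finset.sum_mul, hpsum i, one_mul]
  -- entropy identities
  have hHH : ∑ z : ι → Z, (∏ i, p i (z i)) * Real.log (1 / ∏ i, p i (z i)) = Hb := by
    rw [hHbdef]; exact Hsum p hpsum
  have hHHs : (∑ z : ↥s → Z, (∏ i, p i.1 (z i)) * Real.log (1 / ∏ i, p i.1 (z i)))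
      = ∑ i ∈ s, Hi i := by
    rw [Hsum (fun i : ↥s => p i.1) (fun i => hpsum i.1)]
    exact Finset.sum_coe_sort s Hi
  -- expansion of A
  have hG : ∀ i, (∑ z : ι → Z, (∏ k, p k (z k)) * ℓ (z i) *
        Real.log (1 / ∏ k, p k (z k))) = Di i + ei i * (Hb - Hi i) := by
    intro i
    have bcd : ∀ z : ι → Z, (∏ k, p k (z k)) * ℓ (z i) * Real.log (1 / ∏ k, p k (z k))
        = ∑ j, (∏ k, p k (z k)) * ℓ (z i) * Real.log (1 / p j (z j)) := by
      intro z
      have h' := Hpointwise p z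
      calc (∏ k, p k (z k)) * ℓ (z i) * Real.log (1 / ∏ k, p k (z k))
          = ℓ (z i) * ((∏ k, p k (z k)) * Real.log (1 / ∏ k, p k (z k))) := by ring
        _ = ℓ (z i) * ∑ j, (∏ k, p k (z k)) * Real.log (1 / p j (z j)) := by rw [h']
        _ = ∑ j, (∏ k, p k (z k)) * ℓ (z i) * Real.log (1 / p j (z j)) := by
            rw [Finset.mul_sum]; exact Finset.sum_congr rfl fun j _ => by ring
    simp only [bcd]
    rw [Finset.sum_comm, ← Finset.add_sum_erase _ _ (Finset.mem_univ i)]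
    congr 1
    · have h1 : ∀ z : ι → Z, (∏ k, p k (z k)) * ℓ (z i) * Real.log (1 / p i (z i))
          = (∏ k, p k (z k)) * (ℓ (z i) * Real.log (1 / p i (z i))) := fun z => by ring
      simp only [h1]
      rw [sum_pi_one p hpsum i fun x => ℓ x * Real.log (1 / p i x)]
      exact Finset.sum_congr rfl fun x _ => by ring
    · have h2 : ∀ j ∈ Finset.univ.erase i,
          (∑ z : ι → Z, (∏ k, p k (z k)) * ℓ (z i) * Real.log (1 / p j (z j)))
            = ei i * Hi j := by
        intro j hj
        have hij : i ≠ j := (Finset.ne_of_mem_erase hj).symm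
        exact sum_pi_two p hpsum i j hij ℓ (fun x => Real.log (1 / p j x))
      rw [Finset.sum_congr rfl h2, ← Finset.mul_sum]
      have h3 := Finset.add_sum_erase Finset.univ Hi (Finset.mem_univ i)
      have h4 : ∑ j ∈ Finset.univ.erase i, Hi j = Hb - Hi i := by
        rw [hHbdef]; linarith
      rw [h4]
  have hA : (∑ z : ι → Z, (∏ i, p i (z i)) * ((1 / (N : ℝ)) * ∑ i, ℓ (z i)) *
        Real.log (1 / ∏ i, p i (z i)))
      = (1 / (N : ℝ)) * ∑ i, (Di i + ei i * (Hb - Hi i)) := by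
    have hz : ∀ z : ι → Z, (∏ i, p i (z i)) * ((1 / (N : ℝ)) * ∑ i, ℓ (z i)) *
          Real.log (1 / ∏ i, p i (z i))
        = (1 / (N : ℝ)) * ∑ i, (∏ k, p k (z k)) * ℓ (z i) *
            Real.log (1 / ∏ k, p k (z k)) := by
      intro z
      have : ∑ i, (∏ k, p k (z k)) * ℓ (z i) * Real.log (1 / ∏ k, p k (z k))
          = (∏ k, p k (z k)) * (∑ i, ℓ (z i)) * Real.log (1 / ∏ k, p k (z k)) := by
        rw [Finset.mul_sum, Finset.sum_mul]
      rw [this]; ring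
    simp only [hz]
    rw [← Finset.mul_sum, Finset.sum_comm]
    congr 1
    exact Finset.sum_congr rfl fun i _ => hG i
  -- abbreviations for entropies of subsets
  set T : ℝ := ∑ i ∈ t, Hi i with hTdef
  set Hs : ℝ := ∑ i ∈ s, Hi i with hHsdef
  have hS : (∑ i ∈ s \ t, ∑ zi, p i zi * Real.log (1 / p i zi)) = Hs - T := by
    have := Finset.sum_sdiff (f := Hi) hts
    rw [hHsdef, hTdef]
    change (∑ i ∈ s \ t, Hi i) = _
    linarith
  have hT0 : 0 ≤ T := Finset.sum_nonneg fun i _ => hHi0 i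
  have hTHs : T ≤ Hs :=
    Finset.sum_le_sum_of_subset_of_nonneg hts fun i _ _ => hHi0 i
  have hHsH : Hs ≤ Hb :=
    Finset.sum_le_sum_of_subset_of_nonneg (Finset.subset_univ s) fun i _ _ => hHi0 i
  -- cardinality facts over ℝ
  have hK1 : (1 : ℝ) ≤ K := by exact_mod_cast hKpos
  have hKM : (K : ℝ) ≤ M := by
    have : t.card ≤ s.card := Finset.card_le_card hts
    exact_mod_cast hK ▸ hM ▸ this
  have hMN : (M : ℝ) ≤ N := by
    have : s.card ≤ Fintype.card ι := Finset.card_le_univ s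
    exact_mod_cast hM ▸ hN ▸ this
  have hK0 : (0:ℝ) < K := lt_of_lt_of_le one_pos hK1
  have hM0 : (0:ℝ) < M := lt_of_lt_of_le hK0 hKM
  have hN0 : (0:ℝ) < N := lt_of_lt_of_le hM0 hMN
  -- bound: the B term
  have hBdef : (∑ i ∈ t, ∑ zi, p i zi * ℓ zi * Real.log (1 / p i zi)) = ∑ i ∈ t, Di i := rfl
  -- sums of Di
  have hDt_le : ∑ i ∈ t, Di i ≤ b * T := by
    rw [hTdef, Finset.mul_sum]
    exact Finset.sum_le_sum fun i _ => hDib i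
  have hDt0 : 0 ≤ ∑ i ∈ t, Di i := Finset.sum_nonneg fun i _ => hDi0 i
  have hDsplit : ∑ i ∈ Finset.univ \ t, Di i + ∑ i ∈ t, Di i = ∑ i, Di i :=
    Finset.sum_sdiff (Finset.subset_univ t)
  have hHsplit : ∑ i ∈ Finset.univ \ t, Hi i + ∑ i ∈ t, Hi i = ∑ i, Hi i :=
    Finset.sum_sdiff (Finset.subset_univ t)
  have hDct_le : ∑ i ∈ Finset.univ \ t, Di i ≤ b * (Hb - T) := by
    calc ∑ i ∈ Finset.univ \ t, Di i ≤ ∑ i ∈ Finset.univ \ t, b * Hi i :=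
          Finset.sum_le_sum fun i _ => hDib i
      _ = b * ∑ i ∈ Finset.univ \ t, Hi i := (Finset.mul_sum _ _ _).symm
      _ = b * (Hb - T) := by
          congr 1
          linarith [hHsplit]
  have hEH_le : ∑ i, ei i * (Hb - Hi i) ≤ b * ((N : ℝ) * Hb - Hb) := by
    calc ∑ i, ei i * (Hb - Hi i) ≤ ∑ i, b * (Hb - Hi i) :=
          Finset.sum_le_sum fun i _ =>
            mul_le_mul_of_nonneg_right (heib i) (by linarith [hHiH i])
      _ = b * ((N : ℝ) * Hb - Hb) := by
          rw [← Finset.mul_sum]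
          congr 1
          rw [Finset.sum_sub_distrib, Finset.sum_const, Finset.card_univ, hN, ← hHbdef,
            nsmul_eq_mul]
  have hEH0 : 0 ≤ ∑ i, ei i * (Hb - Hi i) :=
    Finset.sum_nonneg fun i _ => mul_nonneg (hei0 i) (by linarith [hHiH i])
  have hsumD : ∑ i, (Di i + ei i * (Hb - Hi i))
      = ∑ i, Di i + ∑ i, ei i * (Hb - Hi i) := Finset.sum_add_distrib
  -- final inequalities
  have hNinv : (0:ℝ) < 1 / N := by positivity
  have hKinvN : 1 / (N:ℝ) ≤ 1 / (K:ℝ) := one_div_le_one_div_of_le hK0 (hKM.trans hMN)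
  rw [hA, hHH, hHHs, hS]
  rw [abs_sub_le_iff]
  constructor
  · -- upper bound
    have ub : (1 / (N : ℝ)) * ∑ i, (Di i + ei i * (Hb - Hi i))
        - (1 / (K : ℝ)) * ∑ i ∈ t, Di i ≤ b * Hb - b * T / N := by
      rw [hsumD]
      have e1 : (1 / (N : ℝ)) * (∑ i, Di i) - (1 / (K : ℝ)) * ∑ i ∈ t, Di i
          ≤ (1 / (N : ℝ)) * (b * (Hb - T)) := by
        have : (1 / (N : ℝ)) * (∑ i ∈ t, Di i) ≤ (1 / (K : ℝ)) * ∑ i ∈ t, Di i :=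
          mul_le_mul_of_nonneg_right hKinvN hDt0
        nlinarith [hDct_le, hNinv]
      have e2 : (1 / (N : ℝ)) * (∑ i, ei i * (Hb - Hi i))
          ≤ (1 / (N : ℝ)) * (b * ((N : ℝ) * Hb - Hb)) :=
        mul_le_mul_of_nonneg_left hEH_le hNinv.le
      have e3 : (1 / (N : ℝ)) * (b * (Hb - T)) + (1 / (N : ℝ)) * (b * ((N : ℝ) * Hb - Hb))
          = b * Hb - b * T / N := by
        field_simp
        ring
      calc (1 / (N : ℝ)) * (∑ i, Di i + ∑ i, ei i * (Hb - Hi i))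
            - (1 / (K : ℝ)) * ∑ i ∈ t, Di i
          = ((1 / (N : ℝ)) * (∑ i, Di i) - (1 / (K : ℝ)) * ∑ i ∈ t, Di i)
            + (1 / (N : ℝ)) * (∑ i, ei i * (Hb - Hi i)) := by ring
        _ ≤ (1 / (N : ℝ)) * (b * (Hb - T)) + (1 / (N : ℝ)) * (b * ((N : ℝ) * Hb - Hb)) := by
            linarith
        _ = b * Hb - b * T / N := e3
    have := real_cert1 b K M N Hb Hs T hb hK1 hKM hMN hT0 hTHs hHsH
    rw [hBdef]
    linarith
  · -- lower bound
    have lb : (1 / (K : ℝ)) * (∑ i ∈ t, Di i)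
        - (1 / (N : ℝ)) * ∑ i, (Di i + ei i * (Hb - Hi i))
        ≤ (1 / (K : ℝ) - 1 / (N : ℝ)) * (b * T) := by
      rw [hsumD]
      have e1 : ∑ i ∈ t, Di i ≤ ∑ i, Di i := by
        have h0 : (0:ℝ) ≤ ∑ i ∈ Finset.univ \ t, Di i :=
          Finset.sum_nonneg fun i _ => hDi0 i
        linarith [hDsplit]
      have e2 : (1 / (N : ℝ)) * (∑ i ∈ t, Di i) ≤ (1 / (N : ℝ)) * ∑ i, Di i :=
        mul_le_mul_of_nonneg_left e1 hNinv.le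
      have e3 : 0 ≤ (1 / (N : ℝ)) * (∑ i, ei i * (Hb - Hi i)) :=
        mul_nonneg hNinv.le hEH0
      have e4 : (1 / (K : ℝ) - 1 / (N : ℝ)) * (∑ i ∈ t, Di i)
          ≤ (1 / (K : ℝ) - 1 / (N : ℝ)) * (b * T) :=
        mul_le_mul_of_nonneg_left hDt_le (by linarith)
      linarith
    have := real_cert2 b K M N Hb Hs T hb hK1 hKM hMN hT0 hTHs hHsH
    rw [hBdef]
    linarith
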